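/- (Milnor–Schwarz, key inequality) Let G be a group acting by isometries on a geodesic metric space X, let x ∈ X, and let M > 0 be such that G · B_M(x) = X. Let S = {g ∈ G : (g · B_{3M}(x)) ∩ B_{3M}(x) ≠ ∅}. Then S generates G and for every g ∈ G, the word length of g with respect to S satisfies ‖g‖_S ≤ d(x, g·x)/M + 1. -/

import Mathlib

open Pointwise

/-- A continuous, left-invariant pseudometric on a topological group `G`. -/
structure IsContLeftInvPseudometric (G : Type*) [Group G] [TopologicalSpace G]
    (d : G → G → ℝ) : Prop where
  continuous : Continuous fun p : G × G => d p.1 p.2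
  self : ∀ x : G, d x x = 0
  symm : ∀ x y : G, d x y = d y x
  nonneg : ∀ x y : G, 0 ≤ d x y
  triangle : ∀ x y z : G, d x z ≤ d x y + d y z
  left_inv : ∀ g x y : G, d (g * x) (g * y) = d x y

/-- A subset `A` of a topological group `G` is coarsely bounded in `G` if it has
finite diameter with respect to every continuous left-invariant pseudometric on `G`. -/
def IsCoarselyBounded (G : Type*) [Group G] [TopologicalSpace G] (A : Set G) : Prop :=
  ∀ d : G → G → ℝ, IsContLeftInvPseudometric G d →
    ∃ M : ℝ, ∀ a ∈ A, ∀ b ∈ A, d a b ≤ M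

/-- The word length of `g` with respect to a generating set `S`: the least `n` such
that `g` is a product of `n` elements of `S`. -/
noncomputable def wordLength {G : Type*} [Group G] (S : Set G) (g : G) : ℕ :=
  sInf {n : ℕ | ∃ l : List G, l.length = n ∧ (∀ s ∈ l, s ∈ S) ∧ l.prod = g}

/-- `G` admits a geometry if there is a continuous left-invariant pseudometric on `G`
which dominates, in the coarse Lipschitz sense, every continuous left-invariant
pseudometric on `G`. -/
def AdmitsAGeometry (G : Type*) [Group G] [TopologicalSpace G] : Prop :=
  ∃ d : G → G → ℝ, IsContLeftInvPseudometric G d ∧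
    ∀ d' : G → G → ℝ, IsContLeftInvPseudometric G d' →
      ∃ L K : ℝ, 0 < L ∧ 0 ≤ K ∧ ∀ g h : G, d' g h ≤ L * d g h + K

/-- Milnor–Schwarz key inequality: if `G` acts by isometries on a geodesic metric
space `X` with `G • B_M(x) = X`, then `S = {g : g • B_{3M}(x) ∩ B_{3M}(x) ≠ ∅}`
generates `G`, and the word length of `g` with respect to `S ∪ S⁻¹` is at most
`dist x (g • x) / M + 1`. -/
private lemma telescope_prod {G : Type*} [Group G] (c : ℕ → G) (n : ℕ) :
    ((List.range n).map (fun i => (c i)⁻¹ * c (i + 1))).prod = (c 0)⁻¹ * c n := by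
  induction n with
  | zero => simp
  | succ n ih =>
      rw [List.range_succ, List.map_append, List.prod_append, ih]
      simp [mul_assoc]

theorem milnor_schwarz_inequality {G X : Type*} [Group G] [MetricSpace X] [MulAction G X]
    (hiso : ∀ (g : G) (a b : X), dist (g • a) (g • b) = dist a b)
    (hgeo : ∀ a b : X, ∃ γ : ℝ → X, γ 0 = a ∧ γ (dist a b) = b ∧
      ∀ s ∈ Set.Icc (0 : ℝ) (dist a b), ∀ t ∈ Set.Icc (0 : ℝ) (dist a b),
        dist (γ s) (γ t) = |s - t|)
    (x : X) (M : ℝ) (hM : 0 < M)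
    (hcobdd : ∀ y : X, ∃ g : G, y ∈ g • Metric.ball x M) :
    Subgroup.closure {g : G | (g • Metric.ball x (3 * M) ∩ Metric.ball x (3 * M)).Nonempty}
        = ⊤ ∧
      ∀ g : G,
        (wordLength ({g : G | (g • Metric.ball x (3 * M) ∩
              Metric.ball x (3 * M)).Nonempty} ∪
            {g : G | (g • Metric.ball x (3 * M) ∩ Metric.ball x (3 * M)).Nonempty}⁻¹) g : ℝ)
          ≤ dist x (g • x) / M + 1 := by
  classical
  set S : Set G := {g : G | (g • Metric.ball x (3 * M) ∩ Metric.ball x (3 * M)).Nonempty}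
    with hSdef
  -- a criterion for membership in S
  have hmemS : ∀ s : G, dist x (s • x) < 3 * M → s ∈ S := by
    intro s hs
    refine ⟨s • x, ?_, ?_⟩
    · exact ⟨x, by simpa using hM, rfl⟩
    · simp only [Metric.mem_ball]
      rw [dist_comm]; exact hs
  -- key claim: every g is a product of a short word in S
  have key : ∀ g : G, ∃ l : List G, (∀ s ∈ l, s ∈ S) ∧ l.prod = g ∧
      (l.length : ℝ) ≤ dist x (g • x) / M + 1 := by
    intro g
    set D := dist x (g • x) with hD
    have hD0 : (0 : ℝ) ≤ D := dist_nonneg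
    have hDM0 : (0 : ℝ) ≤ D / M := by positivity
    set n : ℕ := ⌊D / M⌋.toNat + 1 with hn
    have hn0 : 0 < n := Nat.succ_pos _
    have hnR0 : (0 : ℝ) < (n : ℕ) := by exact_mod_cast hn0
    have hfloor : ((⌊D / M⌋.toNat : ℤ) : ℝ) = ((⌊D / M⌋ : ℤ) : ℝ) := by
      rw [Int.toNat_of_nonneg (Int.floor_nonneg.mpr hDM0)]
    have hnR : (n : ℝ) ≤ D / M + 1 := by
      have h1 : ((⌊D / M⌋ : ℤ) : ℝ) ≤ D / M := Int.floor_le _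
      have : (n : ℝ) = ((⌊D / M⌋.toNat : ℤ) : ℝ) + 1 := by push_cast [hn]; ring
      rw [this, hfloor]; linarith
    have hDn : D ≤ n * M := by
      have h1 : D / M < ((⌊D / M⌋ : ℤ) : ℝ) + 1 := Int.lt_floor_add_one _
      have h2 : (n : ℝ) = ((⌊D / M⌋ : ℤ) : ℝ) + 1 := by
        push_cast [hn]
        rw [show ((⌊D / M⌋.toNat : ℤ) : ℝ) = ((⌊D / M⌋.toNat : ℕ) : ℝ) from by push_cast; rfl]
          at hfloor
        linarith [hfloor]
      have h3 : D / M ≤ (n : ℝ) := by linarith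
      calc D = D / M * M := by field_simp
        _ ≤ (n : ℝ) * M := by nlinarith
    obtain ⟨γ, hγ0, hγD, hγdist⟩ := hgeo x (g • x)
    set y : ℕ → X := fun i => γ ((i : ℝ) * D / n) with hy
    have hmem : ∀ i : ℕ, i ≤ n → (i : ℝ) * D / n ∈ Set.Icc (0 : ℝ) D := by
      intro i hi
      constructor
      · positivity
      · rw [div_le_iff₀ hnR0]
        have : (i : ℝ) ≤ (n : ℝ) := by exact_mod_cast hi
        nlinarith
    have hy0 : y 0 = x := by simp [hy, hγ0]
    have hyn : y n = g • x := by
      have : ((n : ℕ) : ℝ) * D / n = D := by field_simp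
      simp only [hy, this, hγD]
      exact hγD
    have hydist : ∀ i : ℕ, i < n → dist (y i) (y (i + 1)) ≤ M := by
      intro i hi
      have h1 := hγdist _ (hmem i hi.le) _ (hmem (i + 1) hi)
      rw [show (y i : X) = γ ((i : ℝ) * D / n) from rfl] at *
      have : dist (y i) (y (i + 1)) = |(i : ℝ) * D / n - ((i : ℝ) + 1) * D / n| := by
        simpa [hy] using h1
      rw [this]
      have habs : |(i : ℝ) * D / n - ((i : ℝ) + 1) * D / n| = D / n := by
        rw [abs_sub_comm]
        rw [abs_of_nonneg]
        · ring
        · have : ((i : ℝ) + 1) * D / n - (i : ℝ) * D / n = D / n := by ring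
          rw [this]; positivity
      rw [habs, div_le_iff₀ hnR0]
      nlinarith
    -- choice of group elements
    have hexist : ∀ i : ℕ, ∃ h : G, dist (y i) (h • x) < M := by
      intro i
      obtain ⟨h, hh⟩ := hcobdd (y i)
      rw [Set.mem_smul_set_iff_inv_smul_mem, Metric.mem_ball] at hh
      refine ⟨h, ?_⟩
      have := hiso h⁻¹ (y i) (h • x)
      rw [inv_smul_smul] at this
      rw [← this]; exact hh
    set c : ℕ → G := fun i => if i = 0 then 1 else if i = n then g
      else (hexist i).choose with hc
    have hc0 : c 0 = 1 := by simp [hc]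
    have hcn : c n = g := by simp [hc, hn0.ne']
    have hcdist : ∀ i : ℕ, i ≤ n → dist (y i) (c i • x) < M := by
      intro i hi
      rcases eq_or_ne i 0 with h0 | h0
      · subst h0; simp [hc, hy0, hM]
      rcases eq_or_ne i n with hn' | hn'
      · subst hn'
        rw [hcn, hyn]; simpa using hM
      · simp only [hc, if_neg h0, if_neg hn']
        exact (hexist i).choose_spec
    -- the word
    refine ⟨(List.range n).map (fun i => (c i)⁻¹ * c (i + 1)), ?_, ?_, ?_⟩
    · intro s hs
      simp only [List.mem_map, List.mem_range] at hs
      obtain ⟨i, hi, rfl⟩ := hs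
      apply hmemS
      have hsx : ((c i)⁻¹ * c (i + 1)) • x = (c i)⁻¹ • (c (i + 1) • x) := by
        rw [mul_smul]
      rw [hsx]
      have := hiso (c i) x ((c i)⁻¹ • (c (i + 1) • x))
      rw [smul_inv_smul] at this
      rw [← this]
      calc dist (c i • x) (c (i + 1) • x)
          ≤ dist (c i • x) (y i) + dist (y i) (y (i + 1)) + dist (y (i + 1)) (c (i + 1) • x) :=
            dist_triangle4 _ _ _ _
        _ < M + M + M := by
            have h1 := hcdist i hi.le
            have h2 := hydist i hi
            have h3 := hcdist (i + 1) hi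
            rw [dist_comm] at h1
            linarith
        _ = 3 * M := by ring
    · rw [telescope_prod, hc0, hcn]; simp
    · simp only [List.length_map, List.length_range]
      linarith
  constructor
  · rw [eq_top_iff]
    intro g _
    obtain ⟨l, hl, hprod, _⟩ := key g
    rw [← hprod]
    exact list_prod_mem (fun s hs => Subgroup.subset_closure (hl s hs))
  · intro g
    obtain ⟨l, hl, hprod, hlen⟩ := key g
    have hle : wordLength (S ∪ S⁻¹) g ≤ l.length := by
      apply Nat.sInf_le
      exact ⟨l, rfl, fun s hs => Or.inl (hl s hs), hprod⟩
    calc (wordLength (S ∪ S⁻¹) g : ℝ) ≤ (l.length : ℝ) := by exact_mod_cast hle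
      _ ≤ dist x (g • x) / M + 1 := hlen
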